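/- For each integer k ≥ 2, the number of maximal left-compressed intersecting families in ([2k] choose k) is at least 2^{(1/2)·C(k−1, ⌊k/2⌋)}. -/

import Mathlib

open Finset

/-- `G ≤_LC F`: both are `k`-sets and the increasing enumeration of `G` is
coordinatewise at most that of `F`. -/
def lcLE (k : ℕ) (G F : Finset ℕ) : Prop :=
  ∃ (hG : G.card = k) (hF : F.card = k),
    ∀ i : Fin k, G.orderEmbOfFin hG i ≤ F.orderEmbOfFin hF i

/-- `([n] choose k)`: the `k`-element subsets of `[n] = {1,…,n}`. -/
def ground (n k : ℕ) : Finset (Finset ℕ) := (Finset.Icc 1 n).powersetCard k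

/-- A family is intersecting if any two members meet. -/
def Intersecting' (𝓕 : Set (Finset ℕ)) : Prop := ∀ F ∈ 𝓕, ∀ G ∈ 𝓕, (F ∩ G).Nonempty

/-- A family of `k`-subsets of `[n]` closed under left-compressions. -/
def LeftCompressed (n k : ℕ) (𝓕 : Finset (Finset ℕ)) : Prop :=
  𝓕 ⊆ ground n k ∧ ∀ F ∈ 𝓕, ∀ G ∈ ground n k, lcLE k G F → G ∈ 𝓕

/-- Maximal left-compressed intersecting family. -/
def MLCIF (n k : ℕ) (𝓕 : Finset (Finset ℕ)) : Prop :=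
  LeftCompressed n k 𝓕 ∧ Intersecting' ↑𝓕 ∧
  ∀ 𝓖 : Finset (Finset ℕ), LeftCompressed n k 𝓖 → Intersecting' ↑𝓖 → 𝓕 ⊆ 𝓖 → 𝓕 = 𝓖

/-- The `i`-th canonical family `⟨i⟩`. -/
def canonical (n k i : ℕ) : Finset (Finset ℕ) :=
  (ground n k).filter (fun F => i ≤ (F ∩ Finset.Icc 1 (2*i-1)).card)

/-- `Z_i = [i, 2i-1] ∪ [n-k+i+1, n]`. -/
def Zset (n k i : ℕ) : Finset ℕ :=
  Finset.Icc i (2*i-1) ∪ Finset.Icc (n-k+i+1) n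

/-- `B` is a boundary set (`≤_LC`-maximal element) of `𝓕`. -/
def BoundaryIn (k : ℕ) (𝓕 : Finset (Finset ℕ)) (B : Finset ℕ) : Prop :=
  B ∈ 𝓕 ∧ ∀ F ∈ 𝓕, lcLE k B F → B = F

attribute [local instance] Classical.propDecidable

lemma lcLE_refl {k : ℕ} {F : Finset ℕ} (h : F.card = k) : lcLE k F F :=
  ⟨h, h, fun _ => le_rfl⟩

lemma lcLE_trans {k : ℕ} {A B C : Finset ℕ} (h1 : lcLE k A B) (h2 : lcLE k B C) :
    lcLE k A C := by
  obtain ⟨hA, hB, h1⟩ := h1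
  obtain ⟨hB', hC, h2⟩ := h2
  exact ⟨hA, hC, fun i => (h1 i).trans (h2 i)⟩

lemma filter_card_eq_emb {k : ℕ} {F : Finset ℕ} (hF : F.card = k) (j : ℕ) :
    (F.filter (· ≤ j)).card
      = ((univ : Finset (Fin k)).filter (fun i => F.orderEmbOfFin hF i ≤ j)).card := by
  rw [← Finset.card_image_of_injective _ (F.orderEmbOfFin hF).injective]
  congr 1
  ext x
  simp only [mem_filter, mem_image, mem_univ, true_and]
  constructor
  · rintro ⟨hx, hxj⟩
    have : x ∈ Set.range (F.orderEmbOfFin hF) := by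
      rw [Finset.range_orderEmbOfFin]; exact hx
    obtain ⟨i, rfl⟩ := this
    exact ⟨i, hxj, rfl⟩
  · rintro ⟨i, hij, rfl⟩
    exact ⟨Finset.orderEmbOfFin_mem F hF i, hij⟩

lemma card_filter_le_of_lcLE {k : ℕ} {G F : Finset ℕ} (h : lcLE k G F) (j : ℕ) :
    (F.filter (· ≤ j)).card ≤ (G.filter (· ≤ j)).card := by
  obtain ⟨hG, hF, hle⟩ := h
  rw [filter_card_eq_emb hF j, filter_card_eq_emb hG j]
  apply card_le_card
  intro i hi
  simp only [mem_filter, mem_univ, true_and] at hi ⊢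
  exact (hle i).trans hi
/-- one element from each pair `{2s+1, 2s+2}` according to `α`. -/
def fA (α : Finset ℕ) (s : ℕ) : ℕ := if s ∈ α then 2*s+2 else 2*s+1

def Aset (k : ℕ) (α : Finset ℕ) : Finset ℕ := (range k).image (fA α)

lemma fA_inj (α : Finset ℕ) : Function.Injective (fA α) := by
  intro a b h
  unfold fA at h
  split_ifs at h <;> omega

lemma Aset_card (k : ℕ) (α : Finset ℕ) : (Aset k α).card = k := by
  rw [Aset, Finset.card_image_of_injective _ (fA_inj α), card_range]

lemma Aset_subset (k : ℕ) (α : Finset ℕ) : Aset k α ⊆ Icc 1 (2*k) := by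
  intro x hx
  simp only [Aset, mem_image, mem_range] at hx
  obtain ⟨s, hs, rfl⟩ := hx
  simp only [mem_Icc, fA]
  split_ifs <;> omega

lemma Aset_mem_ground (k : ℕ) (α : Finset ℕ) : Aset k α ∈ ground (2*k) k := by
  rw [ground, Finset.mem_powersetCard]
  exact ⟨Aset_subset k α, Aset_card k α⟩

lemma Aset_disjoint (k : ℕ) (α : Finset ℕ) :
    Aset k α ∩ Aset k (range k \ α) = ∅ := by
  rw [Finset.eq_empty_iff_forall_notMem]
  intro x hx
  rw [mem_inter] at hx
  obtain ⟨h1, h2⟩ := hx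
  simp only [Aset, mem_image, mem_range] at h1 h2
  obtain ⟨s, hs, rfl⟩ := h1
  obtain ⟨s', hs', he⟩ := h2
  have hss : s' = s := by
    unfold fA at he; split_ifs at he <;> omega
  subst hss
  by_cases h : s' ∈ α
  · have : s' ∉ range k \ α := by simp [h]
    unfold fA at he; rw [if_pos h, if_neg this] at he; omega
  · have : s' ∈ range k \ α := by simp [mem_sdiff, mem_range, hs', h]
    unfold fA at he; rw [if_neg h, if_pos this] at he; omega

lemma Aset_filter_lb {k t : ℕ} (ht : t < k) {α : Finset ℕ} (hα : t ∉ α) :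
    t + 1 ≤ ((Aset k α).filter (· ≤ 2*t+1)).card := by
  have h : (range (t+1)).image (fA α) ⊆ (Aset k α).filter (· ≤ 2*t+1) := by
    intro x hx
    simp only [mem_image, mem_range] at hx
    obtain ⟨s, hs, rfl⟩ := hx
    rw [mem_filter]
    constructor
    · simp only [Aset, mem_image, mem_range]
      exact ⟨s, by omega, rfl⟩
    · show fA α s ≤ 2*t+1
      rcases Nat.lt_succ_iff_lt_or_eq.mp hs with h' | rfl
      · unfold fA; split_ifs <;> omega
      · unfold fA; rw [if_neg hα]
  calc t + 1 = ((range (t+1)).image (fA α)).card := by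
        rw [Finset.card_image_of_injective _ (fA_inj α), card_range]
    _ ≤ _ := card_le_card h
def Ifam (k : ℕ) : Finset (Finset ℕ) :=
  ((range k).powerset).filter (fun α => α.card = (k+1)/2 ∧ 0 ∈ α ∧ (Odd k → 1 ∈ α))

def gen (k : ℕ) (S : Finset (Finset ℕ)) (α : Finset ℕ) : Finset ℕ :=
  if α ∈ S then α else range k \ α

noncomputable def Dfam (k : ℕ) (S : Finset (Finset ℕ)) : Finset (Finset ℕ) :=
  (ground (2*k) k).filter (fun G => ∃ α ∈ Ifam k, lcLE k G (Aset k (gen k S α)))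

lemma Dfam_lc (k : ℕ) (S : Finset (Finset ℕ)) : LeftCompressed (2*k) k (Dfam k S) := by
  constructor
  · exact filter_subset _ _
  · intro F hF G hG hGF
    rw [Dfam, mem_filter] at hF ⊢
    obtain ⟨α, hα, hlc⟩ := hF.2
    exact ⟨hG, ⟨α, hα, lcLE_trans hGF hlc⟩⟩

lemma gen_mem_Dfam (k : ℕ) (S : Finset (Finset ℕ)) {α : Finset ℕ} (hα : α ∈ Ifam k) :
    Aset k (gen k S α) ∈ Dfam k S := by
  rw [Dfam, mem_filter]
  exact ⟨Aset_mem_ground k _, ⟨α, hα, lcLE_refl (Aset_card k _)⟩⟩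

lemma Ifam_spec {k : ℕ} {α : Finset ℕ} (hα : α ∈ Ifam k) :
    α ⊆ range k ∧ α.card = (k+1)/2 ∧ 0 ∈ α ∧ (Odd k → 1 ∈ α) := by
  rw [Ifam, mem_filter, mem_powerset] at hα
  tauto

lemma Dfam_intersecting (k : ℕ) (hk : 2 ≤ k) (S : Finset (Finset ℕ)) :
    Intersecting' ↑(Dfam k S) := by
  intro F hF G hG
  by_contra hne
  have hFG : F ∩ G = ∅ := not_nonempty_iff_eq_empty.mp hne
  simp only [Finset.mem_coe, Dfam, mem_filter, ground, Finset.mem_powersetCard] at hF hG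
  obtain ⟨⟨hFsub, hFcard⟩, α, hαI, hlcF⟩ := hF
  obtain ⟨⟨hGsub, hGcard⟩, β, hβI, hlcG⟩ := hG
  -- G is the complement of F in [1, 2k]
  have hGeq : G = Icc 1 (2*k) \ F := by
    apply Finset.eq_of_subset_of_card_le
    · intro x hx
      rw [mem_sdiff]
      refine ⟨hGsub hx, fun hxF => ?_⟩
      have : x ∈ F ∩ G := mem_inter.mpr ⟨hxF, hx⟩
      rw [hFG] at this
      exact notMem_empty x this
    · rw [card_sdiff_of_subset hFsub, Nat.card_Icc]
      omega
  set γ := gen k S α with hγdef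
  set δ := gen k S β with hδdef
  -- the pointwise condition
  have hunion : range k ⊆ γ ∪ δ := by
    intro t htk
    rw [mem_range] at htk
    by_contra htm
    rw [mem_union] at htm
    push_neg at htm
    obtain ⟨htγ, htδ⟩ := htm
    have h1 := (Aset_filter_lb htk htγ).trans (card_filter_le_of_lcLE hlcF (2*t+1))
    have h2 := (Aset_filter_lb htk htδ).trans (card_filter_le_of_lcLE hlcG (2*t+1))
    -- F.filter + G.filter = 2t+1
    have hGf : G.filter (· ≤ 2*t+1)
        = (Icc 1 (2*k)).filter (· ≤ 2*t+1) \ F.filter (· ≤ 2*t+1) := by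
      rw [hGeq]
      ext x
      simp only [mem_filter, mem_sdiff]
      tauto
    have hIccf : (Icc 1 (2*k)).filter (· ≤ 2*t+1) = Icc 1 (2*t+1) := by
      ext x
      simp only [mem_filter, mem_Icc]
      omega
    have hsub' : F.filter (· ≤ 2*t+1) ⊆ (Icc 1 (2*k)).filter (· ≤ 2*t+1) :=
      Finset.filter_subset_filter _ hFsub
    have hFle : (F.filter (· ≤ 2*t+1)).card ≤ 2*t+1 := by
      have := card_le_card hsub'
      rw [hIccf, Nat.card_Icc] at this
      omega
    have hcards : (G.filter (· ≤ 2*t+1)).card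
        = (2*t+1) - (F.filter (· ≤ 2*t+1)).card := by
      rw [hGf, card_sdiff_of_subset hsub', hIccf, Nat.card_Icc]
      omega
    omega
  -- card analysis
  have hγsub : γ ⊆ range k := by
    rw [hγdef, gen]
    split_ifs
    · exact (Ifam_spec hαI).1
    · exact sdiff_subset
  have hδsub : δ ⊆ range k := by
    rw [hδdef, gen]
    split_ifs
    · exact (Ifam_spec hβI).1
    · exact sdiff_subset
  have hunion_card : (γ ∪ δ).card = k := by
    have h1 : γ ∪ δ ⊆ range k := union_subset hγsub hδsub
    have h2 := card_le_card h1
    have h3 := card_le_card hunion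
    rw [card_range] at h2 h3
    omega
  have hiec : (γ ∪ δ).card + (γ ∩ δ).card = γ.card + δ.card :=
    Finset.card_union_add_card_inter γ δ
  have hunion_eq : γ ∪ δ = range k :=
    Finset.eq_of_subset_of_card_le (union_subset hγsub hδsub)
      (by rw [card_range, hunion_card])
  obtain ⟨hαsub, hαcard, hα0, hα1⟩ := Ifam_spec hαI
  obtain ⟨hβsub, hβcard, hβ0, hβ1⟩ := Ifam_spec hβI
  by_cases hαS : α ∈ S <;> by_cases hβS : β ∈ S
  · -- both chosen positively
    have hγ : γ = α := if_pos hαS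
    have hδ : δ = β := if_pos hβS
    have hγc : γ.card = (k+1)/2 := by rw [hγ]; exact hαcard
    have hδc : δ.card = (k+1)/2 := by rw [hδ]; exact hβcard
    rcases Nat.even_or_odd k with hke | hko
    · have h0 : 0 ∈ γ ∩ δ := by rw [hγ, hδ, mem_inter]; exact ⟨hα0, hβ0⟩
      have hc1 : 1 ≤ (γ ∩ δ).card := Finset.card_pos.mpr ⟨0, h0⟩
      have hk2 : k % 2 = 0 := Nat.even_iff.mp hke
      omega
    · have h01 : ({0, 1} : Finset ℕ) ⊆ γ ∩ δ := by
        intro x hx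
        simp only [mem_insert, mem_singleton] at hx
        rw [hγ, hδ, mem_inter]
        rcases hx with rfl | rfl
        · exact ⟨hα0, hβ0⟩
        · exact ⟨hα1 hko, hβ1 hko⟩
      have hc2 : 2 ≤ (γ ∩ δ).card := by
        have := card_le_card h01
        rwa [show ({0,1} : Finset ℕ).card = 2 by decide] at this
      have hk2 : k % 2 = 1 := Nat.odd_iff.mp hko
      omega
  · -- α chosen, β complemented
    have hγ : γ = α := if_pos hαS
    have hδ : δ = range k \ β := if_neg hβS
    have hγc : γ.card = (k+1)/2 := by rw [hγ]; exact hαcard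
    have hδc : δ.card = k - (k+1)/2 := by
      rw [hδ, card_sdiff_of_subset hβsub, card_range, hβcard]
    have hinter : (γ ∩ δ).card = 0 := by omega
    have hδeq : δ = range k \ γ := by
      apply Finset.eq_of_subset_of_card_le
      · intro x hx
        rw [mem_sdiff]
        refine ⟨hδsub hx, fun hxγ => ?_⟩
        have : x ∈ γ ∩ δ := mem_inter.mpr ⟨hxγ, hx⟩
        rw [card_eq_zero.mp hinter] at this
        exact notMem_empty x this
      · rw [card_sdiff_of_subset hγsub, card_range, hγc, hδc]
    have hβα : β = α := by
      have h1 : range k \ (range k \ β) = β := Finset.sdiff_sdiff_eq_self hβsub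
      have h2 : range k \ (range k \ α) = α := Finset.sdiff_sdiff_eq_self hαsub
      rw [hγ] at hδeq
      rw [← h1, ← hδ, hδeq, h2]
    rw [hβα] at hβS
    exact hβS hαS
  · -- β chosen, α complemented (symmetric)
    have hγ : γ = range k \ α := if_neg hαS
    have hδ : δ = β := if_pos hβS
    have hδc : δ.card = (k+1)/2 := by rw [hδ]; exact hβcard
    have hγc : γ.card = k - (k+1)/2 := by
      rw [hγ, card_sdiff_of_subset hαsub, card_range, hαcard]
    have hinter : (γ ∩ δ).card = 0 := by omega
    have hγeq : γ = range k \ δ := by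
      apply Finset.eq_of_subset_of_card_le
      · intro x hx
        rw [mem_sdiff]
        refine ⟨hγsub hx, fun hxδ => ?_⟩
        have : x ∈ γ ∩ δ := mem_inter.mpr ⟨hx, hxδ⟩
        rw [card_eq_zero.mp hinter] at this
        exact notMem_empty x this
      · rw [card_sdiff_of_subset hδsub, card_range, hγc, hδc]
    have hαβ : α = β := by
      have h1 : range k \ (range k \ α) = α := Finset.sdiff_sdiff_eq_self hαsub
      have h2 : range k \ (range k \ β) = β := Finset.sdiff_sdiff_eq_self hβsub
      rw [hδ] at hγeq
      rw [← h1, ← hγ, hγeq, h2]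
    rw [hαβ] at hαS
    exact hαS hβS
  · -- both complemented
    have hγ : γ = range k \ α := if_neg hαS
    have hδ : δ = range k \ β := if_neg hβS
    have hγc : γ.card = k - (k+1)/2 := by
      rw [hγ, card_sdiff_of_subset hαsub, card_range, hαcard]
    have hδc : δ.card = k - (k+1)/2 := by
      rw [hδ, card_sdiff_of_subset hβsub, card_range, hβcard]
    have hke : k % 2 = 0 := by omega
    have hinter : (γ ∩ δ).card = 0 := by omega
    have hδeq : δ = range k \ γ := by
      apply Finset.eq_of_subset_of_card_le
      · intro x hx
        rw [mem_sdiff]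
        refine ⟨hδsub hx, fun hxγ => ?_⟩
        have : x ∈ γ ∩ δ := mem_inter.mpr ⟨hxγ, hx⟩
        rw [card_eq_zero.mp hinter] at this
        exact notMem_empty x this
      · rw [card_sdiff_of_subset hγsub, card_range, hγc, hδc]
        omega
    have hδα : δ = α := by
      rw [hδeq, hγ, Finset.sdiff_sdiff_eq_self hαsub]
    have h0δ : 0 ∉ δ := by
      rw [hδ, mem_sdiff]
      push_neg
      intro _
      exact hβ0
    exact h0δ (hδα ▸ hα0)
lemma exists_mlcif {k : ℕ} (D : Finset (Finset ℕ)) (hLC : LeftCompressed (2*k) k D)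
    (hInt : Intersecting' ↑D) : ∃ 𝓕, MLCIF (2*k) k 𝓕 ∧ D ⊆ 𝓕 := by
  set 𝒞 : Finset (Finset (Finset ℕ)) :=
    ((ground (2*k) k).powerset).filter
      (fun 𝓖 => LeftCompressed (2*k) k 𝓖 ∧ Intersecting' ↑𝓖 ∧ D ⊆ 𝓖) with h𝒞
  have hD : D ∈ 𝒞 := by
    rw [h𝒞, mem_filter, mem_powerset]
    exact ⟨hLC.1, hLC, hInt, subset_rfl⟩
  obtain ⟨𝓕, h𝓕, hmax⟩ := Finset.exists_max_image 𝒞 Finset.card ⟨D, hD⟩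
  rw [h𝒞, mem_filter, mem_powerset] at h𝓕
  obtain ⟨hsub, hF1, hF2, hF3⟩ := h𝓕
  refine ⟨𝓕, ⟨hF1, hF2, ?_⟩, hF3⟩
  intro 𝓖 hG1 hG2 hG3
  have hG𝒞 : 𝓖 ∈ 𝒞 := by
    rw [h𝒞, mem_filter, mem_powerset]
    exact ⟨hG1.1, hG1, hG2, hF3.trans hG3⟩
  exact Finset.eq_of_subset_of_card_le hG3 (hmax 𝓖 hG𝒞)

lemma count_filter_subsets (u s : Finset ℕ) (hs : s ⊆ u) (m : ℕ) (hm : s.card ≤ m) :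
    ((u.powerset).filter (fun α => α.card = m ∧ s ⊆ α)).card
      = (u.card - s.card).choose (m - s.card) := by
  rw [← card_sdiff_of_subset hs, ← Finset.card_powersetCard]
  apply Finset.card_nbij' (fun α => α \ s) (fun β => β ∪ s)
  · intro α hα
    rw [Finset.mem_coe, mem_filter, mem_powerset] at hα
    obtain ⟨hαu, hαc, hsα⟩ := hα
    rw [Finset.mem_coe, Finset.mem_powersetCard]
    constructor
    · intro x hx
      rw [mem_sdiff] at hx ⊢
      exact ⟨hαu hx.1, hx.2⟩
    · rw [card_sdiff_of_subset hsα, hαc]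
  · intro β hβ
    rw [Finset.mem_coe, Finset.mem_powersetCard] at hβ
    obtain ⟨hβu, hβc⟩ := hβ
    have hdisj : Disjoint β s := by
      rw [Finset.disjoint_left]
      intro x hx hxs
      exact (mem_sdiff.mp (hβu hx)).2 hxs
    rw [Finset.mem_coe, mem_filter, mem_powerset]
    refine ⟨?_, ?_, ?_⟩
    · apply union_subset _ hs
      exact hβu.trans sdiff_subset
    · rw [Finset.card_union_of_disjoint hdisj, hβc]
      omega
    · exact subset_union_right
  · intro α hα
    rw [Finset.mem_coe, mem_filter, mem_powerset] at hα
    exact Finset.sdiff_union_of_subset hα.2.2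
  · intro β hβ
    rw [Finset.mem_coe, Finset.mem_powersetCard] at hβ
    have hdisj : Disjoint β s := by
      rw [Finset.disjoint_left]
      intro x hx hxs
      exact (mem_sdiff.mp (hβ.1 hx)).2 hxs
    dsimp only
    rw [Finset.union_sdiff_right, Finset.sdiff_eq_self_of_disjoint hdisj]
lemma Ifam_card_bound (k : ℕ) (hk : 2 ≤ k) :
    (k-1).choose (k/2) ≤ 2 * (Ifam k).card := by
  rcases Nat.even_or_odd k with hke | hko
  · have hk2 : k % 2 = 0 := Nat.even_iff.mp hke
    have heq : Ifam k = ((range k).powerset).filter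
        (fun α => α.card = (k+1)/2 ∧ ({0} : Finset ℕ) ⊆ α) := by
      rw [Ifam]
      apply filter_congr
      intro α _
      have hnodd : ¬ Odd k := by rw [Nat.odd_iff]; omega
      simp only [singleton_subset_iff, hnodd, false_implies, and_true]
    have hsub : ({0} : Finset ℕ) ⊆ range k := by
      rw [singleton_subset_iff, mem_range]; omega
    have hcount := count_filter_subsets (range k) {0} hsub ((k+1)/2)
      (by rw [card_singleton]; omega)
    rw [heq, hcount, card_range, card_singleton]
    have h1 : (k+1)/2 - 1 = k/2 - 1 := by omega
    have h2 := Nat.choose_symm (show k/2 ≤ k - 1 by omega)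
    rw [show k - 1 - k/2 = k/2 - 1 from by omega] at h2
    rw [h1]
    omega
  · have hk2 : k % 2 = 1 := Nat.odd_iff.mp hko
    have hk3 : 3 ≤ k := by omega
    have heq : Ifam k = ((range k).powerset).filter
        (fun α => α.card = (k+1)/2 ∧ ({0, 1} : Finset ℕ) ⊆ α) := by
      rw [Ifam]
      apply filter_congr
      intro α _
      simp only [insert_subset_iff, singleton_subset_iff, hko, true_implies]
    have hsub : ({0, 1} : Finset ℕ) ⊆ range k := by
      intro x hx
      simp only [mem_insert, mem_singleton] at hx
      rw [mem_range]
      omega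
    have hc01 : ({0, 1} : Finset ℕ).card = 2 := by decide
    have hcount := count_filter_subsets (range k) {0, 1} hsub ((k+1)/2)
      (by rw [hc01]; omega)
    rw [card_range, hc01] at hcount
    rw [heq, hcount]
    obtain ⟨a, rfl⟩ : ∃ a, k = 2*a+1 := ⟨k/2, by omega⟩
    have ha : 1 ≤ a := by omega
    have e0 : 2*a+1-1 = 2*a := by omega
    have e1 : (2*a+1)/2 = a := by omega
    have e2 : 2*a+1-2 = 2*a-1 := by omega
    have e3 : (2*a+1+1)/2 - 2 = a-1 := by omega
    rw [e0, e1, e2, e3]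
    have key : (2*a).choose a = (2*a-1).choose (a-1) + (2*a-1).choose a := by
      have h := Nat.choose_succ_succ (2*a-1) (a-1)
      simp only [Nat.succ_eq_add_one] at h
      rw [show 2*a-1+1 = 2*a from by omega, show a-1+1 = a from by omega] at h
      exact h
    have sym : (2*a-1).choose (a-1) = (2*a-1).choose a := by
      have h := Nat.choose_symm (show a ≤ 2*a-1 by omega)
      rw [show 2*a-1-a = a-1 from by omega] at h
      exact h
    omega
/-- For `k ≥ 2` there are at least `2 ^ ((1/2)·C(k-1, ⌊k/2⌋))` MLCIFs on `[2k]`. -/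
theorem stmt13 (k : ℕ) (hk : 2 ≤ k) :
    (2 : ℝ) ^ ((Nat.choose (k-1) (k/2) : ℝ) / 2)
      ≤ (Set.ncard {𝓕 : Finset (Finset ℕ) | MLCIF (2*k) k 𝓕} : ℝ) := by
  have hex : ∀ S ∈ (Ifam k).powerset, ∃ 𝓕, MLCIF (2*k) k 𝓕 ∧ Dfam k S ⊆ 𝓕 := by
    intro S _
    exact exists_mlcif (Dfam k S) (Dfam_lc k S) (Dfam_intersecting k hk S)
  choose! f hf using hex
  have hkey : ∀ S ∈ (Ifam k).powerset, ∀ α ∈ Ifam k,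
      (α ∈ S → Aset k α ∈ f S) ∧ (α ∉ S → Aset k (range k \ α) ∈ f S) := by
    intro S hS α hα
    constructor
    · intro hmem
      have h := gen_mem_Dfam k S hα
      rw [gen, if_pos hmem] at h
      exact (hf S hS).2 h
    · intro hmem
      have h := gen_mem_Dfam k S hα
      rw [gen, if_neg hmem] at h
      exact (hf S hS).2 h
  have hdist : ∀ S₁ ∈ (Ifam k).powerset, ∀ S₂ ∈ (Ifam k).powerset,
      ∀ α ∈ Ifam k, α ∈ S₁ → α ∉ S₂ → f S₁ ≠ f S₂ := by
    intro S₁ h1 S₂ h2 α hα hm1 hm2 heq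
    have hA1 : Aset k α ∈ f S₂ := heq ▸ (hkey S₁ h1 α hα).1 hm1
    have hA2 : Aset k (range k \ α) ∈ f S₂ := (hkey S₂ h2 α hα).2 hm2
    have hint := (hf S₂ h2).1.2.1
    have hne := hint (Aset k α) (Finset.mem_coe.mpr hA1)
      (Aset k (range k \ α)) (Finset.mem_coe.mpr hA2)
    rw [Aset_disjoint] at hne
    exact Finset.not_nonempty_empty hne
  have hinj : Set.InjOn f ↑((Ifam k).powerset) := by
    intro S₁ h1 S₂ h2 heq
    rw [Finset.mem_coe] at h1 h2
    by_contra hne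
    rcases (S₁ \ S₂).eq_empty_or_nonempty with he1 | ⟨α, hα⟩
    · rcases (S₂ \ S₁).eq_empty_or_nonempty with he2 | ⟨α, hα⟩
      · exact hne (Finset.Subset.antisymm (sdiff_eq_empty_iff_subset.mp he1)
          (sdiff_eq_empty_iff_subset.mp he2))
      · rw [mem_sdiff] at hα
        exact hdist S₂ h2 S₁ h1 α (mem_powerset.mp h2 hα.1) hα.1 hα.2 heq.symm
    · rw [mem_sdiff] at hα
      exact hdist S₁ h1 S₂ h2 α (mem_powerset.mp h1 hα.1) hα.1 hα.2 heq
  set J := ((Ifam k).powerset).image f with hJ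
  have hJcard : J.card = 2 ^ (Ifam k).card := by
    rw [hJ, Finset.card_image_of_injOn hinj, card_powerset]
  have hJsub : ↑J ⊆ {𝓕 : Finset (Finset ℕ) | MLCIF (2*k) k 𝓕} := by
    intro x hx
    rw [Finset.mem_coe, hJ, mem_image] at hx
    obtain ⟨S, hS, rfl⟩ := hx
    exact (hf S hS).1
  have hfin : {𝓕 : Finset (Finset ℕ) | MLCIF (2*k) k 𝓕}.Finite := by
    apply Set.Finite.subset (Finset.finite_toSet ((ground (2*k) k).powerset))
    intro 𝓕 h𝓕
    rw [Finset.mem_coe, mem_powerset]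
    exact h𝓕.1.1
  have hle : (J.card : ℕ) ≤ Set.ncard {𝓕 : Finset (Finset ℕ) | MLCIF (2*k) k 𝓕} := by
    have h := Set.ncard_le_ncard hJsub hfin
    rwa [Set.ncard_coe_finset] at h
  have hCle : ((Nat.choose (k-1) (k/2) : ℕ) : ℝ) / 2 ≤ (((Ifam k).card : ℕ) : ℝ) := by
    have h := Ifam_card_bound k hk
    have h' : ((Nat.choose (k-1) (k/2) : ℕ) : ℝ) ≤ 2 * (((Ifam k).card : ℕ) : ℝ) := by
      exact_mod_cast h
    linarith
  calc (2 : ℝ) ^ ((Nat.choose (k-1) (k/2) : ℝ) / 2)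
      ≤ (2 : ℝ) ^ ((((Ifam k).card : ℕ) : ℝ)) :=
        Real.rpow_le_rpow_of_exponent_le one_le_two hCle
    _ = ((2 ^ (Ifam k).card : ℕ) : ℝ) := by
        rw [Real.rpow_natCast]
        push_cast
        ring
    _ = ((J.card : ℕ) : ℝ) := by rw [hJcard]
    _ ≤ _ := by exact_mod_cast hle
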